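/- Let m ≥ 1, let H_m = {diag(ξ_m^k, ξ_m^l, ξ_m^{-k-l}) : k, l ∈ ℤ} ≤ SL(3,ℂ), let T = [[0,1,0],[0,0,1],[1,0,0]] and let R = [[-1,0,0],[0,0,-1],[0,-1,0]] (both in SL(3,ℂ)). Let G_m^6 be the subgroup of SL(3,ℂ) generated by H_m, T and R. Then the subgroup ⟨T, R⟩ is isomorphic to the symmetric group S_3, H_m is normal in G_m^6, H_m ∩ ⟨T,R⟩ = {1}, G_m^6 = H_m·⟨T,R⟩ is the internal semidirect product of ⟨T,R⟩ acting on H_m, and G_m^6 has order 6m². -/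

import Mathlib

noncomputable section

/-- The primitive root of unity `exp(2πi/n)`. -/
def ξ (n : ℕ) : ℂ := Complex.exp (2 * Real.pi * Complex.I / n)

/-- The element `diag(ξ_m^k, ξ_m^l, ξ_m^{-k-l})` of `SL(3,ℂ)`. -/
def diagSL (m : ℕ) (k l : ℤ) : Matrix.SpecialLinearGroup (Fin 3) ℂ :=
  ⟨Matrix.diagonal ![ξ m ^ k, ξ m ^ l, ξ m ^ (-k - l)], by
    have h : ξ m ≠ 0 := Complex.exp_ne_zero _
    rw [Matrix.det_diagonal, Fin.prod_univ_three]
    simp only [Matrix.cons_val_zero, Matrix.cons_val_one, Matrix.head_cons,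
      Matrix.cons_val_two, Matrix.tail_cons, ← zpow_add₀ h]
    norm_num⟩

lemma diagSL_coe (m : ℕ) (k l : ℤ) : (diagSL m k l : Matrix (Fin 3) (Fin 3) ℂ)
    = Matrix.diagonal ![ξ m ^ k, ξ m ^ l, ξ m ^ (-k - l)] := rfl

lemma diagSL_mul (m : ℕ) (k l k' l' : ℤ) :
    diagSL m k l * diagSL m k' l' = diagSL m (k + k') (l + l') := by
  have h : ξ m ≠ 0 := Complex.exp_ne_zero _
  have hv : (fun i => ![ξ m ^ k, ξ m ^ l, ξ m ^ (-k - l)] i *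
        ![ξ m ^ k', ξ m ^ l', ξ m ^ (-k' - l')] i)
      = ![ξ m ^ (k + k'), ξ m ^ (l + l'), ξ m ^ (-(k + k') - (l + l'))] := by
    funext i
    fin_cases i <;> simp [← zpow_add₀ h] <;> (congr 1; ring)
  apply Subtype.ext
  rw [Matrix.SpecialLinearGroup.coe_mul, diagSL_coe, diagSL_coe, diagSL_coe,
    Matrix.diagonal_mul_diagonal, hv]

lemma diagSL_one (m : ℕ) : diagSL m 0 0 = 1 := by
  apply Subtype.ext
  rw [diagSL_coe, Matrix.SpecialLinearGroup.coe_one]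
  rw [show ![ξ m ^ (0:ℤ), ξ m ^ (0:ℤ), ξ m ^ (-(0:ℤ) - 0)] = fun _ => 1 by
    funext i; fin_cases i <;> simp]
  exact Matrix.diagonal_one

lemma diagSL_inv (m : ℕ) (k l : ℤ) : (diagSL m k l)⁻¹ = diagSL m (-k) (-l) := by
  apply inv_eq_of_mul_eq_one_right
  rw [diagSL_mul]
  simp [diagSL_one]

/-- The abelian subgroup `H_m = {diag(ξ_m^k, ξ_m^l, ξ_m^{-k-l}) : k, l ∈ ℤ}` of `SL(3,ℂ)`. -/
def Hm (m : ℕ) : Subgroup (Matrix.SpecialLinearGroup (Fin 3) ℂ) where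
  carrier := { g | ∃ k l : ℤ, g = diagSL m k l }
  one_mem' := ⟨0, 0, (diagSL_one m).symm⟩
  mul_mem' := by
    rintro a b ⟨k, l, rfl⟩ ⟨k', l', rfl⟩
    exact ⟨k + k', l + l', diagSL_mul m k l k' l'⟩
  inv_mem' := by
    rintro a ⟨k, l, rfl⟩
    exact ⟨-k, -l, diagSL_inv m k l⟩

/-- The permutation matrix `T`. -/
def Tm : Matrix.SpecialLinearGroup (Fin 3) ℂ :=
  ⟨!![0, 1, 0; 0, 0, 1; 1, 0, 0], by norm_num [Matrix.det_fin_three, Matrix.cons_val_two]⟩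

/-- The matrix `R = [[-1,0,0],[0,0,-1],[0,-1,0]]`. -/
def Rm : Matrix.SpecialLinearGroup (Fin 3) ℂ :=
  ⟨!![-1, 0, 0; 0, 0, -1; 0, -1, 0], by norm_num [Matrix.det_fin_three, Matrix.cons_val_two]⟩

/-- `G_m^6`, the subgroup of `SL(3,ℂ)` generated by `H_m`, `T` and `R`. -/
def Gm6 (m : ℕ) : Subgroup (Matrix.SpecialLinearGroup (Fin 3) ℂ) :=
  Subgroup.closure ((Hm m : Set (Matrix.SpecialLinearGroup (Fin 3) ℂ)) ∪ {Tm, Rm})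


open Matrix Equiv

/-! ### The signed permutation representation of `S₃` -/

def phiMat (σ : Equiv.Perm (Fin 3)) : Matrix (Fin 3) (Fin 3) ℂ :=
  ((Equiv.Perm.sign σ : ℤ) : ℂ) • (σ⁻¹).permMatrix ℂ

lemma phiMat_det (σ : Equiv.Perm (Fin 3)) : det (phiMat σ) = 1 := by
  rw [phiMat, det_smul, Matrix.det_permutation]
  rcases Int.units_eq_one_or (Equiv.Perm.sign σ) with h | h <;>
    norm_num [h, Fintype.card_fin]

lemma phiMat_mul (σ τ : Equiv.Perm (Fin 3)) :
    phiMat (σ * τ) = phiMat σ * phiMat τ := by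
  rw [phiMat, phiMat, phiMat, _root_.mul_inv_rev, _root_.map_mul]
  have : (τ⁻¹ * σ⁻¹).permMatrix ℂ = (σ⁻¹).permMatrix ℂ * (τ⁻¹).permMatrix ℂ := by
    show ((τ⁻¹ * σ⁻¹).toPEquiv).toMatrix = _
    rw [show (τ⁻¹ * σ⁻¹ : Equiv.Perm (Fin 3)) = (σ⁻¹).trans τ⁻¹ from rfl,
      Equiv.toPEquiv_trans, PEquiv.toMatrix_trans]
  rw [this]
  push_cast
  rw [smul_mul_smul_comm]

lemma phiMat_apply (σ : Equiv.Perm (Fin 3)) (i j : Fin 3) :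
    phiMat σ i j = if σ j = i then ((Equiv.Perm.sign σ : ℤ) : ℂ) else 0 := by
  rw [phiMat, Matrix.smul_apply, Equiv.Perm.permMatrix, PEquiv.toMatrix_apply,
    Equiv.toPEquiv_apply]
  by_cases h : σ j = i
  · rw [if_pos, if_pos h]
    · simp
    · simp [← h]
  · rw [if_neg, if_neg h]
    · simp
    · simp only [Option.mem_def, Option.some_inj]
      intro hc
      exact h (by rw [← hc]; simp)

lemma sign_cast_ne_zero (σ : Equiv.Perm (Fin 3)) :
    ((Equiv.Perm.sign σ : ℤ) : ℂ) ≠ 0 := by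
  rcases Int.units_eq_one_or (Equiv.Perm.sign σ) with h | h <;> norm_num [h]

/-- The group hom `S₃ → SL(3,ℂ)` sending `σ` to the signed permutation matrix. -/
def φ3 : Equiv.Perm (Fin 3) →* Matrix.SpecialLinearGroup (Fin 3) ℂ :=
  MonoidHom.mk' (fun σ => ⟨phiMat σ, phiMat_det σ⟩)
    (fun σ τ => Subtype.ext (phiMat_mul σ τ))

lemma φ3_coe (σ : Equiv.Perm (Fin 3)) :
    (φ3 σ : Matrix (Fin 3) (Fin 3) ℂ) = phiMat σ := rfl

lemma φ3_injective : Function.Injective φ3 := by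
  intro σ τ h
  have hM : phiMat σ = phiMat τ := congrArg Subtype.val h
  ext j
  have he := congrFun (congrFun hM (σ j)) j
  rw [phiMat_apply, phiMat_apply, if_pos rfl] at he
  by_contra hne
  rw [if_neg (fun hc => hne (by rw [hc]))] at he
  · exact sign_cast_ne_zero σ he

lemma Tm_eq_φ3 : Tm = φ3 (finRotate 3)⁻¹ := by
  apply Subtype.ext
  rw [φ3_coe]
  show !![0, 1, 0; 0, 0, 1; 1, 0, 0] = _
  ext i j
  rw [phiMat_apply]
  fin_cases i <;> fin_cases j <;>
    simp (config := { decide := true }) [Matrix.vecHead, Matrix.vecTail,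
      show ((Equiv.Perm.sign (finRotate 3)⁻¹ : ℤ) : ℂ) = 1 by
          rw [show Equiv.Perm.sign ((finRotate 3)⁻¹ : Equiv.Perm (Fin 3)) = 1 by decide +kernel]; simp]

lemma Rm_eq_φ3 : Rm = φ3 (Equiv.swap 1 2) := by
  apply Subtype.ext
  rw [φ3_coe]
  show !![-1, 0, 0; 0, 0, -1; 0, -1, 0] = _
  ext i j
  rw [phiMat_apply]
  fin_cases i <;> fin_cases j <;>
    simp (config := { decide := true }) [Matrix.vecHead, Matrix.vecTail,
      show ((Equiv.Perm.sign (Equiv.swap (1:Fin 3) 2) : ℤ) : ℂ) = -1 by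
          rw [show Equiv.Perm.sign (Equiv.swap (1:Fin 3) 2) = -1 by decide +kernel]; simp]

lemma closure_perm_top :
    Subgroup.closure {(finRotate 3)⁻¹, Equiv.swap 1 2}
      = (⊤ : Subgroup (Equiv.Perm (Fin 3))) := by
  have h1 : ((finRotate 3)⁻¹ : Equiv.Perm (Fin 3)).IsCycle := (isCycle_finRotate (n := 1)).inv
  have h2 : ((finRotate 3)⁻¹ : Equiv.Perm (Fin 3)).support = Finset.univ := by
    rw [Equiv.Perm.support_inv]; exact support_finRotate (n := 1)
  have := Equiv.Perm.closure_cycle_adjacent_swap h1 h2 (2 : Fin 3)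
  rw [show ((finRotate 3)⁻¹ : Equiv.Perm (Fin 3)) 2 = 1 by decide] at this
  rw [show Equiv.swap (1 : Fin 3) 2 = Equiv.swap 2 1 from Equiv.swap_comm 1 2]
  exact this

lemma range_φ3 : φ3.range = Subgroup.closure {Tm, Rm} := by
  apply le_antisymm
  · rintro _ ⟨σ, rfl⟩
    have hσ : σ ∈ Subgroup.closure {(finRotate 3)⁻¹, Equiv.swap 1 2} := by
      rw [closure_perm_top]; trivial
    refine Subgroup.closure_induction (p := fun x _ => φ3 x ∈ Subgroup.closure {Tm, Rm})
      ?_ ?_ ?_ ?_ hσ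
    · rintro x (rfl | rfl)
      · exact Subgroup.subset_closure (by rw [Tm_eq_φ3]; left; rfl)
      · exact Subgroup.subset_closure (by rw [Rm_eq_φ3]; right; rfl)
    · show φ3 1 ∈ Subgroup.closure {Tm, Rm}
      rw [_root_.map_one]; exact one_mem _
    · intro x y _ _ hx hy
      rw [_root_.map_mul]; exact mul_mem hx hy
    · intro x _ hx
      rw [map_inv]; exact inv_mem hx
  · rw [Subgroup.closure_le]
    rintro x (rfl | rfl)
    · exact ⟨(finRotate 3)⁻¹, Tm_eq_φ3.symm⟩
    · exact ⟨Equiv.swap 1 2, Rm_eq_φ3.symm⟩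

/-- `⟨T,R⟩` is isomorphic to `S₃`. -/
def TRiso : (Subgroup.closure {Tm, Rm}) ≃* Equiv.Perm (Fin 3) :=
  (MulEquiv.subgroupCongr range_φ3.symm).trans (MonoidHom.ofInjective φ3_injective).symm

lemma card_TR : Nat.card (Subgroup.closure {Tm, Rm}) = 6 := by
  rw [Nat.card_congr TRiso.toEquiv, Nat.card_eq_fintype_card]
  simp only [Fintype.card_perm, Fintype.card_fin]
  rfl

/-! ### Conjugation relations -/

lemma diagSL_coe' (m : ℕ) (k l e : ℤ) (he : e = -k - l) :
    (diagSL m k l : Matrix (Fin 3) (Fin 3) ℂ)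
      = Matrix.diagonal ![ξ m ^ k, ξ m ^ l, ξ m ^ e] := by
  subst he; rfl

lemma T_diag (a b c : ℂ) :
    !![(0:ℂ), 1, 0; 0, 0, 1; 1, 0, 0] * Matrix.diagonal ![a, b, c]
      = Matrix.diagonal ![b, c, a] * !![(0:ℂ), 1, 0; 0, 0, 1; 1, 0, 0] := by
  ext i j
  fin_cases i <;> fin_cases j <;>
    simp [Matrix.mul_apply, Fin.sum_univ_three, Matrix.diagonal, Matrix.vecHead, Matrix.vecTail]

lemma R_diag (a b c : ℂ) :
    !![(-1:ℂ), 0, 0; 0, 0, -1; 0, -1, 0] * Matrix.diagonal ![a, b, c]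
      = Matrix.diagonal ![a, c, b] * !![(-1:ℂ), 0, 0; 0, 0, -1; 0, -1, 0] := by
  ext i j
  fin_cases i <;> fin_cases j <;>
    simp [Matrix.mul_apply, Fin.sum_univ_three, Matrix.diagonal, Matrix.vecHead, Matrix.vecTail]

lemma T_conj (m : ℕ) (k l : ℤ) :
    Tm * diagSL m k l = diagSL m l (-k - l) * Tm := by
  apply Subtype.ext
  rw [Matrix.SpecialLinearGroup.coe_mul, Matrix.SpecialLinearGroup.coe_mul,
    diagSL_coe, diagSL_coe' m l (-k - l) k (by ring)]
  exact T_diag _ _ _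

lemma R_conj (m : ℕ) (k l : ℤ) :
    Rm * diagSL m k l = diagSL m k (-k - l) * Rm := by
  apply Subtype.ext
  rw [Matrix.SpecialLinearGroup.coe_mul, Matrix.SpecialLinearGroup.coe_mul,
    diagSL_coe, diagSL_coe' m k (-k - l) l (by ring)]
  exact R_diag _ _ _

lemma Tm_mem_normalizer (m : ℕ) : Tm ∈ Subgroup.normalizer (Hm m : Set (Matrix.SpecialLinearGroup (Fin 3) ℂ)) := by
  rw [Subgroup.mem_normalizer_iff]
  intro h
  constructor
  · rintro ⟨k, l, rfl⟩
    exact ⟨l, -k - l, by rw [T_conj, mul_assoc, mul_inv_cancel, mul_one]⟩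
  · rintro ⟨k, l, hh⟩
    have h2 := T_conj m (-k - l) k
    rw [show (-(-k - l) - k : ℤ) = l by ring] at h2
    refine ⟨-k - l, k, ?_⟩
    have hkey : h = Tm⁻¹ * (diagSL m k l) * Tm := by
      rw [← hh]; group
    rw [hkey, mul_assoc, ← h2, ← mul_assoc, inv_mul_cancel, one_mul]

lemma Rm_mem_normalizer (m : ℕ) : Rm ∈ Subgroup.normalizer (Hm m : Set (Matrix.SpecialLinearGroup (Fin 3) ℂ)) := by
  rw [Subgroup.mem_normalizer_iff]
  intro h
  constructor
  · rintro ⟨k, l, rfl⟩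
    exact ⟨k, -k - l, by rw [R_conj, mul_assoc, mul_inv_cancel, mul_one]⟩
  · rintro ⟨k, l, hh⟩
    have h2 := R_conj m k (-k - l)
    rw [show (-k - (-k - l) : ℤ) = l by ring] at h2
    refine ⟨k, -k - l, ?_⟩
    have hkey : h = Rm⁻¹ * (diagSL m k l) * Rm := by
      rw [← hh]; group
    rw [hkey, mul_assoc, ← h2, ← mul_assoc, inv_mul_cancel, one_mul]

lemma Gm6_le_normalizer (m : ℕ) : Gm6 m ≤ Subgroup.normalizer (Hm m : Set (Matrix.SpecialLinearGroup (Fin 3) ℂ)) := by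
  rw [Gm6, Subgroup.closure_le]
  rintro x (hx | rfl | rfl)
  · exact Subgroup.le_normalizer hx
  · exact Tm_mem_normalizer m
  · exact Rm_mem_normalizer m

lemma TR_le_normalizer (m : ℕ) : Subgroup.closure {Tm, Rm} ≤ Subgroup.normalizer (Hm m : Set (Matrix.SpecialLinearGroup (Fin 3) ℂ)) := by
  rw [Subgroup.closure_le]
  rintro x (rfl | rfl)
  · exact Tm_mem_normalizer m
  · exact Rm_mem_normalizer m

lemma Hm_le_Gm6 (m : ℕ) : Hm m ≤ Gm6 m :=
  fun _ hx => Subgroup.subset_closure (Or.inl hx)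

lemma TR_le_Gm6 (m : ℕ) : Subgroup.closure {Tm, Rm} ≤ Gm6 m :=
  Subgroup.closure_mono (Set.subset_union_right)

lemma Gm6_eq_sup (m : ℕ) : Hm m ⊔ Subgroup.closure {Tm, Rm} = Gm6 m := by
  rw [Gm6, Subgroup.closure_union, Subgroup.closure_eq]

lemma Gm6_decomp (m : ℕ) :
    ∀ g ∈ Gm6 m, ∃ h ∈ Hm m, ∃ t ∈ Subgroup.closure {Tm, Rm}, g = h * t := by
  set K := Subgroup.closure {Tm, Rm} with hK
  let S : Subgroup (Matrix.SpecialLinearGroup (Fin 3) ℂ) :=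
    { carrier := { g | ∃ h ∈ Hm m, ∃ t ∈ K, g = h * t }
      one_mem' := ⟨1, one_mem _, 1, one_mem _, (one_mul 1).symm⟩
      mul_mem' := by
        rintro a b ⟨h, hh, t, ht, rfl⟩ ⟨h', hh', t', ht', rfl⟩
        refine ⟨h * (t * h' * t⁻¹), ?_, t * t', mul_mem ht ht', by group⟩
        exact mul_mem hh
          (((Subgroup.mem_normalizer_iff.mp (TR_le_normalizer m ht)) h').mp hh')
      inv_mem' := by
        rintro a ⟨h, hh, t, ht, rfl⟩
        refine ⟨t⁻¹ * h⁻¹ * t, ?_, t⁻¹, inv_mem ht, by group⟩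
        have := ((Subgroup.mem_normalizer_iff.mp
          (TR_le_normalizer m (inv_mem ht))) h⁻¹).mp (inv_mem hh)
        simpa [mul_assoc] using this }
  intro g hg
  have hle : Gm6 m ≤ S := by
    rw [Gm6, Subgroup.closure_le]
    rintro x (hx | rfl | rfl)
    · exact ⟨x, hx, 1, one_mem _, (mul_one x).symm⟩
    · exact ⟨1, one_mem _, Tm, Subgroup.subset_closure (Or.inl rfl), (one_mul Tm).symm⟩
    · exact ⟨1, one_mem _, Rm, Subgroup.subset_closure (Or.inr rfl), (one_mul Rm).symm⟩
  exact hle hg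

lemma Hm_inf_TR (m : ℕ) : Hm m ⊓ Subgroup.closure {Tm, Rm} = ⊥ := by
  rw [eq_bot_iff]
  rintro x ⟨⟨k, l, rfl⟩, hK⟩
  rw [← range_φ3] at hK
  obtain ⟨σ, hσ⟩ := hK
  have hσ1 : σ = 1 := by
    have key : ∀ j, σ j = j := by
      intro j
      by_contra hne
      have hM : phiMat σ = (diagSL m k l : Matrix (Fin 3) (Fin 3) ℂ) := by
        rw [← φ3_coe, hσ]
      have he := congrFun (congrFun hM (σ j)) j
      rw [phiMat_apply, if_pos rfl, diagSL_coe, Matrix.diagonal_apply_ne _ hne] at he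
      exact sign_cast_ne_zero σ he
    exact Equiv.ext key
  rw [Subgroup.mem_bot, ← hσ, hσ1, _root_.map_one]

/-! ### Counting -/

lemma xi_ne_zero (m : ℕ) : ξ m ≠ 0 := Complex.exp_ne_zero _

lemma xi_prim (m : ℕ) (hm : 1 ≤ m) : IsPrimitiveRoot (ξ m) m := by
  have := Complex.isPrimitiveRoot_exp m (by omega)
  convert this using 2
  rfl

lemma xi_zpow_val (m : ℕ) (hm : 1 ≤ m) (k : ℤ) :
    haveI : NeZero m := ⟨by omega⟩
    ξ m ^ k = ξ m ^ (((k : ZMod m).val : ℤ)) := by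
  haveI : NeZero m := ⟨by omega⟩
  have hdvd : (m : ℤ) ∣ k - ((k : ZMod m).val : ℤ) := by
    rw [← ZMod.intCast_zmod_eq_zero_iff_dvd]
    push_cast
    simp [ZMod.natCast_val, ZMod.cast_id]
  obtain ⟨c, hc⟩ := hdvd
  have hk : k = ((k : ZMod m).val : ℤ) + m * c := by omega
  have step : ξ m ^ k = ξ m ^ (((k : ZMod m).val : ℤ)) * ξ m ^ ((m : ℤ) * c) := by
    rw [← zpow_add₀ (xi_ne_zero m), ← hk]
  rw [step, _root_.zpow_mul, zpow_natCast, zpow_natCast,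
    (xi_prim m hm).pow_eq_one, _root_.one_zpow, mul_one]

lemma diagSL_congr (m : ℕ) (k l k' l' : ℤ) (h1 : ξ m ^ k = ξ m ^ k')
    (h2 : ξ m ^ l = ξ m ^ l') : diagSL m k l = diagSL m k' l' := by
  have h3 : ξ m ^ (-k - l) = ξ m ^ (-k' - l') := by
    rw [show (-k - l : ℤ) = -(k + l) by ring, show (-k' - l' : ℤ) = -(k' + l') by ring,
      _root_.zpow_neg, _root_.zpow_neg, zpow_add₀ (xi_ne_zero m),
      zpow_add₀ (xi_ne_zero m), h1, h2]
  apply Subtype.ext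
  rw [diagSL_coe, diagSL_coe]
  congr 1
  ext i
  fin_cases i <;> simp [h1, h2, h3, Matrix.vecHead, Matrix.vecTail]

lemma card_Hm (m : ℕ) (hm : 1 ≤ m) : Nat.card (Hm m) = m ^ 2 := by
  haveI : NeZero m := ⟨by omega⟩
  let f : ZMod m × ZMod m → Hm m := fun p =>
    ⟨diagSL m p.1.val p.2.val, ⟨p.1.val, p.2.val, rfl⟩⟩
  have hf : Function.Bijective f := by
    constructor
    · rintro ⟨a, b⟩ ⟨a', b'⟩ hab
      have hM0 := congrArg (fun x : Hm m =>
        ((x : Matrix.SpecialLinearGroup (Fin 3) ℂ) : Matrix (Fin 3) (Fin 3) ℂ)) hab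
      have hM : (diagSL m a.val b.val : Matrix (Fin 3) (Fin 3) ℂ)
          = diagSL m a'.val b'.val := hM0
      rw [diagSL_coe, diagSL_coe] at hM
      have h0 := congrFun (congrFun hM 0) 0
      have h1 := congrFun (congrFun hM 1) 1
      rw [Matrix.diagonal_apply_eq, Matrix.diagonal_apply_eq] at h0 h1
      simp only [Matrix.cons_val_zero, Matrix.cons_val_one, Matrix.head_cons] at h0 h1
      rw [zpow_natCast, zpow_natCast] at h0 h1
      have ha : a.val = a'.val := (xi_prim m hm).pow_inj (ZMod.val_lt a) (ZMod.val_lt a') h0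
      have hb : b.val = b'.val := (xi_prim m hm).pow_inj (ZMod.val_lt b) (ZMod.val_lt b') h1
      have ha' : a = a' := by
        have := congrArg (fun n : ℕ => (n : ZMod m)) ha
        simpa [ZMod.natCast_val, ZMod.cast_id] using this
      have hb' : b = b' := by
        have := congrArg (fun n : ℕ => (n : ZMod m)) hb
        simpa [ZMod.natCast_val, ZMod.cast_id] using this
      rw [Prod.ext_iff]; exact ⟨ha', hb'⟩
    · rintro ⟨g, k, l, rfl⟩
      refine ⟨((k : ZMod m), (l : ZMod m)), ?_⟩
      apply Subtype.ext
      show diagSL m ((k : ZMod m).val : ℤ) ((l : ZMod m).val : ℤ) = diagSL m k l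
      exact diagSL_congr m _ _ k l (xi_zpow_val m hm k).symm (xi_zpow_val m hm l).symm
  rw [← Nat.card_eq_of_bijective f hf, Nat.card_prod, Nat.card_zmod]
  ring

lemma card_Gm6 (m : ℕ) (hm : 1 ≤ m) : Nat.card (Gm6 m) = 6 * m ^ 2 := by
  let F : Hm m × Subgroup.closure {Tm, Rm} → Gm6 m := fun p =>
    ⟨(p.1 : Matrix.SpecialLinearGroup (Fin 3) ℂ) * p.2,
      mul_mem (Hm_le_Gm6 m p.1.2) (TR_le_Gm6 m p.2.2)⟩
  have hF : Function.Bijective F := by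
    constructor
    · rintro ⟨h, t⟩ ⟨h', t'⟩ hp
      have heq : (h : Matrix.SpecialLinearGroup (Fin 3) ℂ) * t = h' * t' :=
        congrArg Subtype.val hp
      have hx : (h' : Matrix.SpecialLinearGroup (Fin 3) ℂ)⁻¹ * h
          = (t' : Matrix.SpecialLinearGroup (Fin 3) ℂ) * (t : Matrix.SpecialLinearGroup (Fin 3) ℂ)⁻¹ := by
        rw [inv_mul_eq_iff_eq_mul, ← mul_assoc, eq_mul_inv_iff_mul_eq]
        exact heq
      have hmem : (h' : Matrix.SpecialLinearGroup (Fin 3) ℂ)⁻¹ * h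
          ∈ Hm m ⊓ Subgroup.closure {Tm, Rm} := by
        constructor
        · exact Subgroup.mul_mem _ (Subgroup.inv_mem _ h'.2) h.2
        · rw [hx]; exact Subgroup.mul_mem _ t'.2 (Subgroup.inv_mem _ t.2)
      rw [Hm_inf_TR m, Subgroup.mem_bot] at hmem
      have hh : (h' : Matrix.SpecialLinearGroup (Fin 3) ℂ) = h := inv_mul_eq_one.mp hmem
      have ht : (t' : Matrix.SpecialLinearGroup (Fin 3) ℂ) = t := by
        rw [hmem] at hx
        exact mul_inv_eq_one.mp hx.symm
      exact Prod.ext (Subtype.ext hh.symm) (Subtype.ext ht.symm)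
    · rintro ⟨g, hg⟩
      obtain ⟨h, hh, t, ht, rfl⟩ := Gm6_decomp m g hg
      exact ⟨(⟨h, hh⟩, ⟨t, ht⟩), rfl⟩
  rw [← Nat.card_eq_of_bijective F hF, Nat.card_prod, card_Hm m hm, card_TR]
  ring

theorem Gm6_semidirect_structure (m : ℕ) (hm : 1 ≤ m) :
    Nonempty ((Subgroup.closure {Tm, Rm}) ≃* Equiv.Perm (Fin 3)) ∧
    ((Hm m).subgroupOf (Gm6 m)).Normal ∧
    Hm m ⊓ Subgroup.closure {Tm, Rm} = ⊥ ∧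
    Hm m ⊔ Subgroup.closure {Tm, Rm} = Gm6 m ∧
    (∀ g ∈ Gm6 m, ∃ h ∈ Hm m, ∃ t ∈ Subgroup.closure {Tm, Rm}, g = h * t) ∧
    Nat.card (Gm6 m) = 6 * m ^ 2 := by
  refine ⟨⟨TRiso⟩, ?_, Hm_inf_TR m, Gm6_eq_sup m, Gm6_decomp m, card_Gm6 m hm⟩
  constructor
  intro n hn g
  rw [Subgroup.mem_subgroupOf] at hn ⊢
  have hmem := Subgroup.mem_normalizer_iff.mp (Gm6_le_normalizer m g.2)
  rw [Subgroup.coe_mul, Subgroup.coe_mul]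
  exact (hmem (n : Matrix.SpecialLinearGroup (Fin 3) ℂ)).mp hn


end
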